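/- Let X be a compact metric space and f : X → X continuous with induced map f̄ on K(X). Suppose that for every nonempty open set G ⊆ K(X) × K(X), the set G ∩ C(f̄) (Li–Yorke pairs of f̄ in G) is of second category. Then for every nonempty open set G' ⊆ X × X, the set G' ∩ C(f) is of second category. -/

import Mathlib

open Filter Metric TopologicalSpace

/-- The induced map on the hyperspace of nonempty compact subsets. -/
noncomputable def inducedMap {X : Type*} [MetricSpace X] (f : X → X) (hf : Continuous f) :
    NonemptyCompacts X → NonemptyCompacts X :=
  fun K => ⟨⟨f '' K, K.isCompact.image hf⟩, K.nonempty.image f⟩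

section Helpers

open Set

variable {X : Type*} [MetricSpace X]

lemma inducedMap_coe (f : X → X) (hf : Continuous f) (A : NonemptyCompacts X) :
    ((inducedMap f hf A : Set X)) = f '' (A : Set X) := rfl

lemma inducedMap_iterate_coe (f : X → X) (hf : Continuous f) (n : ℕ) (A : NonemptyCompacts X) :
    (((inducedMap f hf)^[n] A : Set X)) = f^[n] '' (A : Set X) := by
  induction n with
  | zero => simp
  | succ n ih =>
      rw [Function.iterate_succ_apply', inducedMap_coe, ih, Function.iterate_succ',
        Set.image_comp]

lemma dist_inducedMap_iter (f : X → X) (hf : Continuous f) (n : ℕ) (A B : NonemptyCompacts X) :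
    dist ((inducedMap f hf)^[n] A) ((inducedMap f hf)^[n] B)
      = hausdorffDist (f^[n] '' (A : Set X)) (f^[n] '' (B : Set X)) := by
  rw [NonemptyCompacts.dist_eq, inducedMap_iterate_coe, inducedMap_iterate_coe]

lemma isOpen_hyperSub {P : Set X} (hP : IsOpen P) :
    IsOpen {A : NonemptyCompacts X | (A : Set X) ⊆ P} := by
  rw [Metric.isOpen_iff]
  intro A hA
  obtain ⟨δ, δpos, hδ⟩ := A.isCompact.exists_thickening_subset_open hP hA
  refine ⟨δ, δpos, fun B hB => ?_⟩
  intro b hb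
  have hfin := hausdorffEdist_ne_top_of_nonempty_of_bounded B.nonempty A.nonempty
      B.isCompact.isBounded A.isCompact.isBounded
  have hBA : hausdorffDist (B : Set X) (A : Set X) < δ := by
    rw [mem_ball, NonemptyCompacts.dist_eq] at hB; exact hB
  obtain ⟨a, haA, hab⟩ := exists_dist_lt_of_hausdorffDist_lt hb hBA hfin
  exact hδ (mem_thickening_iff.2 ⟨a, haA, hab⟩)

lemma IsNowhereDense.isMeagre' {Y : Type*} [TopologicalSpace Y] {s : Set Y}
    (hs : IsNowhereDense s) : IsMeagre s := by
  refine IsMeagre.mono subset_closure ?_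
  show (closure s)ᶜ ∈ residual Y
  exact residual_of_dense_open isClosed_closure.isOpen_compl
    (interior_eq_empty_iff_dense_compl.mp hs)

lemma IsMeagre.union' {Y : Type*} [TopologicalSpace Y] {s t : Set Y}
    (hs : IsMeagre s) (ht : IsMeagre t) : IsMeagre (s ∪ t) := by
  show (s ∪ t)ᶜ ∈ residual Y
  rw [Set.compl_union]
  exact Filter.inter_mem hs ht

lemma exists_dist_bound (Y : Type*) [MetricSpace Y] [CompactSpace Y] :
    ∃ C, ∀ x y : Y, dist x y ≤ C := by
  obtain ⟨C, hC⟩ := Metric.isBounded_iff.1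
    ((isCompact_univ : IsCompact (Set.univ : Set Y)).isBounded)
  exact ⟨C, fun x y => hC (Set.mem_univ x) (Set.mem_univ y)⟩

lemma exists_uniform_ball {t : Set X} (htfin : t.Finite) (c : X → X) (T : X → Set X)
    (hT : ∀ x, IsOpen (T x)) (hc : ∀ x, c x ∈ T x) :
    ∃ ε > 0, ∀ x ∈ t, ball (c x) ε ⊆ T x := by
  refine Set.Finite.induction_on (motive := fun u _ => ∃ ε > 0, ∀ x ∈ u, ball (c x) ε ⊆ T x)
    t htfin ⟨1, one_pos, by simp⟩ ?_
  rintro a u - - ⟨ε, hε, hball⟩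
  obtain ⟨εa, hεa, hballa⟩ := Metric.isOpen_iff.1 (hT a) (c a) (hc a)
  refine ⟨min ε εa, lt_min hε hεa, ?_⟩
  intro x hx
  rcases Set.mem_insert_iff.1 hx with rfl | hxu
  · exact (ball_subset_ball (min_le_right _ _)).trans hballa
  · exact (ball_subset_ball (min_le_left _ _)).trans (hball x hxu)


variable [CompactSpace X]

/-- The set of Li–Yorke pairs of the induced hyperspace map. -/
def hyperLYset (f : X → X) (hf : Continuous f) :
    Set (NonemptyCompacts X × NonemptyCompacts X) :=
  {p | liminf (fun n => dist ((inducedMap f hf)^[n] p.1) ((inducedMap f hf)^[n] p.2)) atTop = 0 ∧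
    0 < limsup (fun n => dist ((inducedMap f hf)^[n] p.1) ((inducedMap f hf)^[n] p.2)) atTop}

/-- A singleton as a nonempty compact set. -/
def singNC (x : X) : NonemptyCompacts X :=
  ⟨⟨{x}, isCompact_singleton⟩, Set.singleton_nonempty x⟩

lemma singNC_coe (x : X) : ((singNC x : NonemptyCompacts X) : Set X) = {x} := rfl

/-- Existence of hyperspace Li–Yorke pairs inside any pair of open windows. -/
lemma hyperLY (f : X → X) (hf : Continuous f)
    (h : ∀ G : Set (NonemptyCompacts X × NonemptyCompacts X), IsOpen G → G.Nonempty →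
      ¬ IsMeagre (G ∩ hyperLYset f hf))
    {P Q : Set X} (hP : IsOpen P) (hQ : IsOpen Q) (hPne : P.Nonempty) (hQne : Q.Nonempty) :
    ∃ A B : NonemptyCompacts X, (A : Set X) ⊆ P ∧ (B : Set X) ⊆ Q ∧
      liminf (fun n => dist ((inducedMap f hf)^[n] A) ((inducedMap f hf)^[n] B)) atTop = 0 ∧
      0 < limsup (fun n => dist ((inducedMap f hf)^[n] A) ((inducedMap f hf)^[n] B)) atTop := by
  obtain ⟨x, hx⟩ := hPne
  obtain ⟨y, hy⟩ := hQne
  set G : Set (NonemptyCompacts X × NonemptyCompacts X) :=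
    {p | (p.1 : Set X) ⊆ P ∧ (p.2 : Set X) ⊆ Q} with hGdef
  have hGo : IsOpen G := by
    have : G = (Prod.fst ⁻¹' {A : NonemptyCompacts X | (A : Set X) ⊆ P}) ∩
        (Prod.snd ⁻¹' {B : NonemptyCompacts X | (B : Set X) ⊆ Q}) := rfl
    rw [this]
    exact ((isOpen_hyperSub hP).preimage continuous_fst).inter
      ((isOpen_hyperSub hQ).preimage continuous_snd)
  have hGne : G.Nonempty := by
    refine ⟨(singNC x, singNC y), ?_, ?_⟩ <;>
      simp [singNC_coe, Set.singleton_subset_iff, hx, hy]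
  have hne : (G ∩ hyperLYset f hf).Nonempty := by
    by_contra hemp
    rw [Set.not_nonempty_iff_eq_empty] at hemp
    exact h G hGo hGne (hemp ▸ (show IsMeagre (∅ : Set (NonemptyCompacts X × NonemptyCompacts X)) by
      rw [IsMeagre, Set.compl_empty]; exact Filter.univ_mem))
  obtain ⟨⟨A, B⟩, ⟨h1, h2⟩, h3, h4⟩ := hne
  exact ⟨A, B, h1, h2, h3, h4⟩

/-- The basic squeeze lemma: assuming the set of "limsup > 0" pairs over `U ×ˢ V` is meagre,
every open rectangle in `U ×ˢ V` contains an open sub-rectangle whose points are uniformly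
eventually `δ`-close under iteration. -/
lemma squeeze (f : X → X) (hf : Continuous f) {U V : Set X}
    (hMuv : IsMeagre ((U ×ˢ V) ∩
      {p : X × X | 0 < limsup (fun n => dist (f^[n] p.1) (f^[n] p.2)) atTop}))
    {R R' : Set X} (hR : IsOpen R) (hR' : IsOpen R') (hRne : R.Nonempty) (hR'ne : R'.Nonempty)
    (hRU : R ⊆ U) (hR'V : R' ⊆ V) {δ : ℝ} (hδ : 0 < δ) :
    ∃ R₁ R₁' N, IsOpen R₁ ∧ IsOpen R₁' ∧ R₁.Nonempty ∧ R₁'.Nonempty ∧ R₁ ⊆ R ∧ R₁' ⊆ R' ∧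
      ∀ x ∈ R₁, ∀ y ∈ R₁', ∀ n ≥ N, dist (f^[n] x) (f^[n] y) ≤ δ := by
  obtain ⟨C, hC⟩ := exists_dist_bound X
  set M := (U ×ˢ V) ∩
      {p : X × X | 0 < limsup (fun n => dist (f^[n] p.1) (f^[n] p.2)) atTop} with hMdef
  set Q : ℕ → Set (X × X) := fun N =>
    ⋂ n, ⋂ (_ : N ≤ n), {p : X × X | dist (f^[n] p.1) (f^[n] p.2) ≤ δ} with hQdef
  have hQc : ∀ N, IsClosed (Q N) := fun N =>
    isClosed_iInter fun n => isClosed_iInter fun _ =>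
      isClosed_le (Continuous.dist ((hf.iterate n).comp continuous_fst)
        ((hf.iterate n).comp continuous_snd)) continuous_const
  have hQmem : ∀ N p, p ∈ Q N ↔ ∀ n ≥ N, dist (f^[n] p.1) (f^[n] p.2) ≤ δ := by
    intro N p
    simp [hQdef]
  have hcover : R ×ˢ R' ⊆ M ∪ ⋃ N, (Q N ∩ R ×ˢ R') := by
    rintro ⟨x, y⟩ ⟨hx, hy⟩
    rcases lt_or_ge 0 (limsup (fun n => dist (f^[n] x) (f^[n] y)) atTop) with hpos | hle
    · exact Or.inl ⟨⟨hRU hx, hR'V hy⟩, hpos⟩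
    · have hev : ∀ᶠ n in atTop, dist (f^[n] x) (f^[n] y) < δ :=
        eventually_lt_of_limsup_lt (lt_of_le_of_lt hle hδ)
          (isBoundedUnder_of ⟨C, fun n => hC _ _⟩)
      obtain ⟨N, hN⟩ := eventually_atTop.1 hev
      refine Or.inr (Set.mem_iUnion.2 ⟨N, ?_, ⟨hx, hy⟩⟩)
      exact (hQmem N _).2 fun n hn => (hN n hn).le
  have hRRo : IsOpen (R ×ˢ R') := hR.prod hR'
  have hRRnm : ¬ IsMeagre (R ×ˢ R') := not_isMeagre_of_isOpen hRRo (hRne.prod hR'ne)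
  have hex : ∃ N, ¬ IsMeagre (Q N ∩ R ×ˢ R') := by
    by_contra hall
    push_neg at hall
    exact hRRnm (IsMeagre.mono hcover (hMuv.union' (isMeagre_iUnion hall)))
  obtain ⟨N, hN⟩ := hex
  have hint : (interior (Q N) ∩ R ×ˢ R').Nonempty := by
    by_contra hemp
    rw [Set.not_nonempty_iff_eq_empty] at hemp
    apply hN
    have hsub : Q N ∩ R ×ˢ R' ⊆ Q N \ interior (Q N) := by
      rintro p ⟨hq, hr⟩
      refine ⟨hq, fun hi => ?_⟩
      exact Set.eq_empty_iff_forall_notMem.1 hemp p ⟨hi, hr⟩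
    have hnwd : IsNowhereDense (Q N \ interior (Q N)) := by
      have h1 : closure (Q N \ interior (Q N)) ⊆ Q N :=
        closure_minimal Set.diff_subset (hQc N)
      have h2 : closure (Q N \ interior (Q N)) ⊆ (interior (Q N))ᶜ :=
        closure_minimal (fun p hp => hp.2) isOpen_interior.isClosed_compl
      rw [IsNowhereDense, Set.eq_empty_iff_forall_notMem]
      intro p hp
      exact h2 (interior_subset hp) (interior_mono h1 hp)
    exact hnwd.isMeagre'.mono hsub
  obtain ⟨p, hpi, hpR⟩ := hint
  obtain ⟨R₁, R₁', ho1, ho2, hp1, hp2, hsub12⟩ :=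
    isOpen_prod_iff.1 isOpen_interior p.1 p.2 (by simpa using hpi)
  refine ⟨R₁ ∩ R, R₁' ∩ R', N, ho1.inter hR, ho2.inter hR',
    ⟨p.1, hp1, hpR.1⟩, ⟨p.2, hp2, hpR.2⟩, Set.inter_subset_right, Set.inter_subset_right, ?_⟩
  intro x hx y hy n hn
  have hxy : (x, y) ∈ Q N := interior_subset (hsub12 (Set.mk_mem_prod hx.1 hy.1))
  exact (hQmem N _).1 hxy n hn


/-- Iterated squeeze over a finite list of window pairs. -/
lemma multiSqueeze (f : X → X) (hf : Continuous f) {U V : Set X}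
    (hMuv : IsMeagre ((U ×ˢ V) ∩
      {p : X × X | 0 < limsup (fun n => dist (f^[n] p.1) (f^[n] p.2)) atTop}))
    {δ : ℝ} (hδ : 0 < δ) (L : List (X × X)) (S S' : X → Set X)
    (hS : ∀ x, IsOpen (S x) ∧ (S x).Nonempty ∧ S x ⊆ U)
    (hS' : ∀ x, IsOpen (S' x) ∧ (S' x).Nonempty ∧ S' x ⊆ V) :
    ∃ (T T' : X → Set X) (N : ℕ),
      (∀ x, IsOpen (T x) ∧ (T x).Nonempty ∧ T x ⊆ S x) ∧
      (∀ x, IsOpen (T' x) ∧ (T' x).Nonempty ∧ T' x ⊆ S' x) ∧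
      ∀ p ∈ L, ∀ x ∈ T p.1, ∀ y ∈ T' p.2, ∀ n ≥ N, dist (f^[n] x) (f^[n] y) ≤ δ := by
  classical
  induction L with
  | nil =>
      exact ⟨S, S', 0, fun x => ⟨(hS x).1, (hS x).2.1, subset_rfl⟩,
        fun x => ⟨(hS' x).1, (hS' x).2.1, subset_rfl⟩, by simp⟩
  | cons hd tl ih =>
      obtain ⟨T, T', N, hT, hT', hprop⟩ := ih
      obtain ⟨R₁, R₁', N₀, ho1, ho2, hne1, hne2, hsub1, hsub2, hsq⟩ :=
        squeeze f hf hMuv (hT hd.1).1 (hT' hd.2).1 (hT hd.1).2.1 (hT' hd.2).2.1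
          ((hT hd.1).2.2.trans (hS hd.1).2.2) ((hT' hd.2).2.2.trans (hS' hd.2).2.2) hδ
      refine ⟨Function.update T hd.1 R₁, Function.update T' hd.2 R₁', max N N₀, ?_, ?_, ?_⟩
      · intro x
        by_cases hx : x = hd.1
        · rw [hx, Function.update_self]
          exact ⟨ho1, hne1, hsub1.trans (hT hd.1).2.2⟩
        · rw [Function.update_of_ne hx]
          exact hT x
      · intro x
        by_cases hx : x = hd.2
        · rw [hx, Function.update_self]
          exact ⟨ho2, hne2, hsub2.trans (hT' hd.2).2.2⟩
        · rw [Function.update_of_ne hx]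
          exact hT' x
      · intro p hp x hx y hy n hn
        have hupd1 : ∀ z, Function.update T hd.1 R₁ z ⊆ T z := by
          intro z
          by_cases hz : z = hd.1
          · subst hz; rw [Function.update_self]; exact hsub1
          · rw [Function.update_of_ne hz]
        have hupd2 : ∀ z, Function.update T' hd.2 R₁' z ⊆ T' z := by
          intro z
          by_cases hz : z = hd.2
          · subst hz; rw [Function.update_self]; exact hsub2
          · rw [Function.update_of_ne hz]
        rcases List.mem_cons.1 hp with rfl | htl
        · rw [Function.update_self] at hx hy
          exact hsq x hx y hy n (le_trans (le_max_right _ _) hn)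
        · exact hprop p htl x (hupd1 _ hx) y (hupd2 _ hy) n (le_trans (le_max_left _ _) hn)

/-- Core step: the set of pairs with positive limsup is non-meagre over any open rectangle. -/
lemma step2 (f : X → X) (hf : Continuous f)
    (h : ∀ G : Set (NonemptyCompacts X × NonemptyCompacts X), IsOpen G → G.Nonempty →
      ¬ IsMeagre (G ∩ hyperLYset f hf))
    {U V : Set X} (hU : IsOpen U) (hV : IsOpen V) (hUne : U.Nonempty) (hVne : V.Nonempty) :
    ¬ IsMeagre ((U ×ˢ V) ∩
      {p : X × X | 0 < limsup (fun n => dist (f^[n] p.1) (f^[n] p.2)) atTop}) := by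
  classical
  intro hMuv
  set F := inducedMap f hf with hFdef
  obtain ⟨x₀, hx₀⟩ := hUne
  obtain ⟨y₀, hy₀⟩ := hVne
  set G : Set (NonemptyCompacts X × NonemptyCompacts X) :=
    {p | (p.1 : Set X) ⊆ U ∧ (p.2 : Set X) ⊆ V} with hGdef
  have hGo : IsOpen G := by
    have : G = (Prod.fst ⁻¹' {A : NonemptyCompacts X | (A : Set X) ⊆ U}) ∩
        (Prod.snd ⁻¹' {B : NonemptyCompacts X | (B : Set X) ⊆ V}) := rfl
    rw [this]
    exact ((isOpen_hyperSub hU).preimage continuous_fst).inter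
      ((isOpen_hyperSub hV).preimage continuous_snd)
  have hGne : G.Nonempty :=
    ⟨(singNC x₀, singNC y₀), by
      simp [hGdef, singNC_coe, Set.singleton_subset_iff, hx₀, hy₀]⟩
  apply h G hGo hGne
  -- the "uniformly eventually small at scale 1/(k+1)" open sets
  set D : ℕ → Set (NonemptyCompacts X × NonemptyCompacts X) := fun k =>
    {p | ∃ ε > 0, ∃ N, ∀ q : NonemptyCompacts X × NonemptyCompacts X,
      dist q.1 p.1 < ε → dist q.2 p.2 < ε →
      ∀ n ≥ N, dist (F^[n] q.1) (F^[n] q.2) ≤ 1 / (k + 1)} with hDdef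
  have hDo : ∀ k, IsOpen (D k) := by
    intro k
    rw [Metric.isOpen_iff]
    rintro p ⟨ε, hε, N, hp⟩
    refine ⟨ε / 2, half_pos hε, fun p' hp' => ⟨ε / 2, half_pos hε, N, fun q h1 h2 n hn => ?_⟩⟩
    rw [mem_ball] at hp'
    have hd1 : dist p'.1 p.1 ≤ dist p' p := by rw [Prod.dist_eq]; exact le_max_left _ _
    have hd2 : dist p'.2 p.2 ≤ dist p' p := by rw [Prod.dist_eq]; exact le_max_right _ _
    refine hp q ?_ ?_ n hn
    · calc dist q.1 p.1 ≤ dist q.1 p'.1 + dist p'.1 p.1 := dist_triangle _ _ _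
        _ < ε / 2 + ε / 2 := add_lt_add_of_lt_of_le h1 (hd1.trans hp'.le)
        _ = ε := add_halves ε
    · calc dist q.2 p.2 ≤ dist q.2 p'.2 + dist p'.2 p.2 := dist_triangle _ _ _
        _ < ε / 2 + ε / 2 := add_lt_add_of_lt_of_le h2 (hd2.trans hp'.le)
        _ = ε := add_halves ε
  -- density of D k in G
  have hDdense : ∀ k, ∀ H, IsOpen H → H.Nonempty → H ⊆ G → (H ∩ D k).Nonempty := by
    intro k H hHo hHne hHG
    have hδk : (0 : ℝ) < 1 / (k + 1) := by positivity
    obtain ⟨⟨A₀, B₀⟩, hABH⟩ := hHne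
    obtain ⟨ρ, hρ, hball⟩ := Metric.isOpen_iff.1 hHo _ hABH
    have hA₀U : (A₀ : Set X) ⊆ U := (hHG hABH).1
    have hB₀V : (B₀ : Set X) ⊆ V := (hHG hABH).2
    obtain ⟨t, htA, htfin, htcov⟩ :=
      finite_approx_of_totallyBounded A₀.isCompact.totallyBounded (ρ / 4) (by positivity)
    obtain ⟨t', ht'B, ht'fin, ht'cov⟩ :=
      finite_approx_of_totallyBounded B₀.isCompact.totallyBounded (ρ / 4) (by positivity)
    -- windows
    set S : X → Set X := fun x => if x ∈ t then ball x (ρ / 4) ∩ U else U with hSdef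
    set S' : X → Set X := fun x => if x ∈ t' then ball x (ρ / 4) ∩ V else V with hS'def
    have hSprop : ∀ x, IsOpen (S x) ∧ (S x).Nonempty ∧ S x ⊆ U := by
      intro x
      rw [hSdef]
      by_cases hx : x ∈ t
      · simp only [if_pos hx]
        exact ⟨isOpen_ball.inter hU, ⟨x, mem_ball_self (by positivity), hA₀U (htA hx)⟩,
          Set.inter_subset_right⟩
      · simp only [if_neg hx]
        exact ⟨hU, ⟨x₀, hx₀⟩, subset_rfl⟩
    have hS'prop : ∀ x, IsOpen (S' x) ∧ (S' x).Nonempty ∧ S' x ⊆ V := by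
      intro x
      rw [hS'def]
      by_cases hx : x ∈ t'
      · simp only [if_pos hx]
        exact ⟨isOpen_ball.inter hV, ⟨x, mem_ball_self (by positivity), hB₀V (ht'B hx)⟩,
          Set.inter_subset_right⟩
      · simp only [if_neg hx]
        exact ⟨hV, ⟨y₀, hy₀⟩, subset_rfl⟩
    set L : List (X × X) := htfin.toFinset.toList ×ˢ ht'fin.toFinset.toList with hLdef
    obtain ⟨T, T', N, hT, hT', hsq⟩ := multiSqueeze f hf hMuv hδk L S S' hSprop hS'prop
    -- choose representative points
    choose c hc using fun x => (hT x).2.1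
    choose c' hc' using fun x => (hT' x).2.1
    have htne : t.Nonempty := by
      obtain ⟨a, ha⟩ := A₀.nonempty
      have := htcov ha
      simp only [Set.mem_iUnion] at this
      obtain ⟨x, hx, -⟩ := this
      exact ⟨x, hx⟩
    have ht'ne : t'.Nonempty := by
      obtain ⟨b, hb⟩ := B₀.nonempty
      have := ht'cov hb
      simp only [Set.mem_iUnion] at this
      obtain ⟨x, hx, -⟩ := this
      exact ⟨x, hx⟩
    set Astar : NonemptyCompacts X := ⟨⟨c '' t, (htfin.image c).isCompact⟩, htne.image c⟩
    set Bstar : NonemptyCompacts X := ⟨⟨c' '' t', (ht'fin.image c').isCompact⟩, ht'ne.image c'⟩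
    have hAstar_coe : (Astar : Set X) = c '' t := rfl
    have hBstar_coe : (Bstar : Set X) = c' '' t' := rfl
    -- window containment for the chosen points
    have hcT : ∀ x ∈ t, c x ∈ ball x (ρ / 4) ∩ U := by
      intro x hx
      have := (hT x).2.2 (hc x)
      simp only [hSdef, if_pos hx] at this
      exact this
    have hc'T : ∀ x ∈ t', c' x ∈ ball x (ρ / 4) ∩ V := by
      intro x hx
      have := (hT' x).2.2 (hc' x)
      simp only [hS'def, if_pos hx] at this
      exact this
    -- uniform ball radius
    obtain ⟨ε₁, hε₁, hball₁⟩ := exists_uniform_ball htfin c T (fun x => (hT x).1) hc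
    obtain ⟨ε₂, hε₂, hball₂⟩ := exists_uniform_ball ht'fin c' T' (fun x => (hT' x).1) hc'
    set ε := min ε₁ ε₂ with hεdef
    have hεpos : 0 < ε := lt_min hε₁ hε₂
    -- Astar is close to A₀
    have hdA : dist Astar A₀ ≤ ρ / 2 := by
      rw [NonemptyCompacts.dist_eq]
      apply hausdorffDist_le_of_mem_dist (by positivity)
      · rintro y ⟨x, hx, rfl⟩
        exact ⟨x, htA hx, by
          have := (hcT x hx).1
          rw [mem_ball] at this
          linarith⟩
      · intro a ha
        have := htcov ha
        simp only [Set.mem_iUnion] at this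
        obtain ⟨x, hx, hax⟩ := this
        refine ⟨c x, Set.mem_image_of_mem c hx, ?_⟩
        rw [mem_ball] at hax
        have h2 := (hcT x hx).1
        rw [mem_ball] at h2
        calc dist a (c x) ≤ dist a x + dist x (c x) := dist_triangle _ _ _
          _ ≤ ρ / 4 + ρ / 4 := by rw [dist_comm x (c x)]; linarith
          _ = ρ / 2 := by ring
    have hdB : dist Bstar B₀ ≤ ρ / 2 := by
      rw [NonemptyCompacts.dist_eq]
      apply hausdorffDist_le_of_mem_dist (by positivity)
      · rintro y ⟨x, hx, rfl⟩
        exact ⟨x, ht'B hx, by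
          have := (hc'T x hx).1
          rw [mem_ball] at this
          linarith⟩
      · intro b hb
        have := ht'cov hb
        simp only [Set.mem_iUnion] at this
        obtain ⟨x, hx, hbx⟩ := this
        refine ⟨c' x, Set.mem_image_of_mem c' hx, ?_⟩
        rw [mem_ball] at hbx
        have h2 := (hc'T x hx).1
        rw [mem_ball] at h2
        calc dist b (c' x) ≤ dist b x + dist x (c' x) := dist_triangle _ _ _
          _ ≤ ρ / 4 + ρ / 4 := by rw [dist_comm x (c' x)]; linarith
          _ = ρ / 2 := by ring
    have hmemH : (Astar, Bstar) ∈ H := by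
      apply hball
      rw [mem_ball, Prod.dist_eq]
      exact max_lt (lt_of_le_of_lt hdA (by linarith)) (lt_of_le_of_lt hdB (by linarith))
    -- membership in D k
    refine ⟨(Astar, Bstar), hmemH, ε, hεpos, N, ?_⟩
    intro q hq1 hq2 n hn
    -- every point of q.1 lies in some window T x, x ∈ t
    have hq1' : ∀ a ∈ (q.1 : Set X), ∃ x ∈ t, a ∈ T x := by
      intro a ha
      have hfin := hausdorffEdist_ne_top_of_nonempty_of_bounded q.1.nonempty Astar.nonempty
        q.1.isCompact.isBounded Astar.isCompact.isBounded
      have hlt : hausdorffDist (q.1 : Set X) (Astar : Set X) < ε := by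
        rw [← NonemptyCompacts.dist_eq]; exact hq1
      obtain ⟨y, hy, hay⟩ := exists_dist_lt_of_hausdorffDist_lt ha hlt hfin
      rw [hAstar_coe] at hy
      obtain ⟨x, hxt, rfl⟩ := hy
      refine ⟨x, hxt, hball₁ x hxt ?_⟩
      rw [mem_ball]
      exact lt_of_lt_of_le hay (min_le_left _ _)
    have hq2' : ∀ b ∈ (q.2 : Set X), ∃ x ∈ t', b ∈ T' x := by
      intro b hb
      have hfin := hausdorffEdist_ne_top_of_nonempty_of_bounded q.2.nonempty Bstar.nonempty
        q.2.isCompact.isBounded Bstar.isCompact.isBounded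
      have hlt : hausdorffDist (q.2 : Set X) (Bstar : Set X) < ε := by
        rw [← NonemptyCompacts.dist_eq]; exact hq2
      obtain ⟨y, hy, hby⟩ := exists_dist_lt_of_hausdorffDist_lt hb hlt hfin
      rw [hBstar_coe] at hy
      obtain ⟨x, hxt, rfl⟩ := hy
      refine ⟨x, hxt, hball₂ x hxt ?_⟩
      rw [mem_ball]
      exact lt_of_lt_of_le hby (min_le_right _ _)
    -- pointwise cross-estimate
    have hcross : ∀ a ∈ (q.1 : Set X), ∀ b ∈ (q.2 : Set X),
        dist (f^[n] a) (f^[n] b) ≤ 1 / (k + 1) := by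
      intro a ha b hb
      obtain ⟨x, hxt, haT⟩ := hq1' a ha
      obtain ⟨x', hx't, hbT⟩ := hq2' b hb
      have hmemL : (x, x') ∈ L := by
        rw [hLdef]
        exact List.pair_mem_product.2
          ⟨Finset.mem_toList.2 (htfin.mem_toFinset.2 hxt),
           Finset.mem_toList.2 (ht'fin.mem_toFinset.2 hx't)⟩
      exact hsq (x, x') hmemL a haT b hbT n hn
    rw [hFdef, dist_inducedMap_iter]
    apply hausdorffDist_le_of_mem_dist hδk.le
    · rintro u ⟨a, ha, rfl⟩
      obtain ⟨b, hb⟩ := q.2.nonempty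
      exact ⟨f^[n] b, Set.mem_image_of_mem _ hb, hcross a ha b hb⟩
    · rintro v ⟨b, hb, rfl⟩
      obtain ⟨a, ha⟩ := q.1.nonempty
      refine ⟨f^[n] a, Set.mem_image_of_mem _ ha, ?_⟩
      rw [dist_comm]
      exact hcross a ha b hb
  -- each G \ D k is meagre
  have hGD : ∀ k, IsMeagre (G \ D k) := by
    intro k
    have hnwd : IsNowhereDense (G \ D k) := by
      rw [IsNowhereDense, Set.eq_empty_iff_forall_notMem]
      intro p hp
      set O := interior (closure (G \ D k)) with hOdef
      have hOo : IsOpen O := isOpen_interior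
      have hOsub : O ⊆ closure (G \ D k) := interior_subset
      obtain ⟨q, hqO, hqG⟩ := mem_closure_iff.1 (hOsub hp) O hOo hp
      obtain ⟨z, hz1, hz2⟩ :=
        hDdense k (O ∩ G) (hOo.inter hGo) ⟨q, hqO, hqG.1⟩ Set.inter_subset_right
      have hzopen : IsOpen (O ∩ G ∩ D k) := (hOo.inter hGo).inter (hDo k)
      obtain ⟨w, hw1, hw2⟩ := mem_closure_iff.1 (hOsub hz1.1) (O ∩ G ∩ D k) hzopen ⟨hz1, hz2⟩
      exact hw2.2 hw1.2
    exact hnwd.isMeagre'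
  -- the Li-Yorke pairs in G avoid ⋂ D k
  have hsub : G ∩ hyperLYset f hf ⊆ ⋃ k, (G \ D k) := by
    rintro p ⟨hpG, hpLi, hpLs⟩
    obtain ⟨k, hk⟩ := exists_nat_one_div_lt hpLs
    refine Set.mem_iUnion.2 ⟨k, hpG, fun hpD => ?_⟩
    obtain ⟨ε, hε, N, hprop⟩ := hpD
    have hev : ∀ n ≥ N, dist (F^[n] p.1) (F^[n] p.2) ≤ 1 / (k + 1) := by
      intro n hn
      exact hprop p (by simpa using hε) (by simpa using hε) n hn
    have hls : limsup (fun n => dist (F^[n] p.1) (F^[n] p.2)) atTop ≤ 1 / (k + 1) := by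
      apply limsup_le_of_le
      · have hb : IsBoundedUnder (· ≥ ·) atTop (fun n => dist (F^[n] p.1) (F^[n] p.2)) :=
          isBoundedUnder_of ⟨0, fun n => dist_nonneg⟩
        exact hb.isCoboundedUnder_le
      · exact eventually_atTop.2 ⟨N, hev⟩
    have : (1 : ℝ) / (k + 1) < 1 / (k + 1) := lt_of_lt_of_le hk hls
    exact lt_irrefl _ this
  exact IsMeagre.mono hsub (isMeagre_iUnion hGD)

end Helpers

/-- If for every nonempty open set `G ⊆ K(X) × K(X)` the set of Li–Yorke pairs of `f̄` in `G`
is of second category (i.e. not meagre), then for every nonempty open set `G' ⊆ X × X` the set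
of Li–Yorke pairs of `f` in `G'` is of second category. -/
theorem secondCategory_LiYorke_of_induced
    {X : Type*} [MetricSpace X] [CompactSpace X] (f : X → X) (hf : Continuous f)
    (h : ∀ G : Set (NonemptyCompacts X × NonemptyCompacts X), IsOpen G → G.Nonempty →
      ¬ IsMeagre (G ∩ {p : NonemptyCompacts X × NonemptyCompacts X |
        liminf (fun n => dist ((inducedMap f hf)^[n] p.1) ((inducedMap f hf)^[n] p.2)) atTop = 0 ∧
        0 < limsup (fun n => dist ((inducedMap f hf)^[n] p.1) ((inducedMap f hf)^[n] p.2)) atTop})) :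
    ∀ G' : Set (X × X), IsOpen G' → G'.Nonempty →
      ¬ IsMeagre (G' ∩ {p : X × X |
        liminf (fun n => dist (f^[n] p.1) (f^[n] p.2)) atTop = 0 ∧
        0 < limsup (fun n => dist (f^[n] p.1) (f^[n] p.2)) atTop}) := by
  intro G' hG' hG'ne hMeagre
  obtain ⟨C, hC⟩ := exists_dist_bound X
  obtain ⟨CK, hCK⟩ := exists_dist_bound (NonemptyCompacts X)
  have h' : ∀ G : Set (NonemptyCompacts X × NonemptyCompacts X), IsOpen G → G.Nonempty →
      ¬ IsMeagre (G ∩ hyperLYset f hf) := h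
  obtain ⟨p₀, hp₀⟩ := hG'ne
  obtain ⟨r, hr, hball⟩ := Metric.isOpen_iff.1 hG' p₀ hp₀
  set U := ball p₀.1 r with hUdef
  set V := ball p₀.2 r with hVdef
  have hUV : U ×ˢ V ⊆ G' := by rw [hUdef, hVdef, ball_prod_same]; exact hball
  -- the open dense approximation sets for "liminf = 0"
  set E : ℕ → ℕ → Set (X × X) := fun k N =>
    ⋃ n, ⋃ (_ : N ≤ n), {p : X × X | dist (f^[n] p.1) (f^[n] p.2) < 1 / (k + 1)} with hEdef
  have hEo : ∀ k N, IsOpen (E k N) := by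
    intro k N
    exact isOpen_iUnion fun n => isOpen_iUnion fun _ =>
      isOpen_lt (Continuous.dist ((hf.iterate n).comp continuous_fst)
        ((hf.iterate n).comp continuous_snd)) continuous_const
  have hEd : ∀ k N, Dense (E k N) := by
    intro k N
    rw [Metric.dense_iff]
    intro p ε hε
    obtain ⟨A, B, hAP, hBQ, hli, hls⟩ := hyperLY f hf h' (isOpen_ball (x := p.1) (ε := ε))
      (isOpen_ball (x := p.2) (ε := ε)) ⟨p.1, mem_ball_self hε⟩ ⟨p.2, mem_ball_self hε⟩
    have hcob : IsCoboundedUnder (· ≥ ·) atTop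
        (fun n => dist ((inducedMap f hf)^[n] A) ((inducedMap f hf)^[n] B)) := by
      have hb : IsBoundedUnder (· ≤ ·) atTop
          (fun n => dist ((inducedMap f hf)^[n] A) ((inducedMap f hf)^[n] B)) :=
        isBoundedUnder_of ⟨CK, fun n => hCK _ _⟩
      exact hb.isCoboundedUnder_ge
    have hfreq : ∃ᶠ n in atTop,
        dist ((inducedMap f hf)^[n] A) ((inducedMap f hf)^[n] B) < 1 / (k + 1) :=
      frequently_lt_of_liminf_lt hcob (by rw [hli]; positivity)
    obtain ⟨n, hnN, hdist⟩ := (frequently_atTop.1 hfreq) N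
    rw [dist_inducedMap_iter] at hdist
    obtain ⟨a, ha⟩ := A.nonempty
    have hfin := hausdorffEdist_ne_top_of_nonempty_of_bounded (A.nonempty.image f^[n])
      (B.nonempty.image f^[n]) (A.isCompact.image (hf.iterate n)).isBounded
      (B.isCompact.image (hf.iterate n)).isBounded
    obtain ⟨v, hv, hav⟩ :=
      exists_dist_lt_of_hausdorffDist_lt (Set.mem_image_of_mem f^[n] ha) hdist hfin
    obtain ⟨b, hb, rfl⟩ := hv
    refine ⟨(a, b), ?_, Set.mem_iUnion.2 ⟨n, Set.mem_iUnion.2 ⟨hnN, hav⟩⟩⟩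
    rw [← ball_prod_same]
    exact ⟨hAP ha, hBQ hb⟩
  have hEc : ∀ k N, IsMeagre (E k N)ᶜ := by
    intro k N
    show (E k N)ᶜᶜ ∈ residual (X × X)
    rw [compl_compl]
    exact residual_of_dense_open (hEo k N) (hEd k N)
  -- step 2: positive-limsup pairs are non-meagre over U ×ˢ V
  have hM := step2 f hf h' (isOpen_ball (x := p₀.1) (ε := r)) (isOpen_ball (x := p₀.2) (ε := r))
    ⟨p₀.1, mem_ball_self hr⟩ ⟨p₀.2, mem_ball_self hr⟩
  apply hM
  -- but they would be meagre if the conclusion failed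
  have hsub : (U ×ˢ V) ∩
      {p : X × X | 0 < limsup (fun n => dist (f^[n] p.1) (f^[n] p.2)) atTop} ⊆
      (G' ∩ {p : X × X |
        liminf (fun n => dist (f^[n] p.1) (f^[n] p.2)) atTop = 0 ∧
        0 < limsup (fun n => dist (f^[n] p.1) (f^[n] p.2)) atTop}) ∪ ⋃ k, ⋃ N, (E k N)ᶜ := by
    rintro p ⟨hpUV, hpls⟩
    by_cases hall : ∀ k N : ℕ, p ∈ E k N
    · left
      refine ⟨hUV hpUV, ?_, hpls⟩
      have hge : 0 ≤ liminf (fun n => dist (f^[n] p.1) (f^[n] p.2)) atTop := by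
        apply le_liminf_of_le
        · have hb : IsBoundedUnder (· ≤ ·) atTop (fun n => dist (f^[n] p.1) (f^[n] p.2)) :=
            isBoundedUnder_of ⟨C, fun n => hC _ _⟩
          exact hb.isCoboundedUnder_ge
        · exact Eventually.of_forall fun n => dist_nonneg
      have hle : ∀ k : ℕ, liminf (fun n => dist (f^[n] p.1) (f^[n] p.2)) atTop ≤ 1 / (k + 1) := by
        intro k
        apply liminf_le_of_frequently_le
        · rw [frequently_atTop]
          intro N
          have := hall k N
          simp only [hEdef, Set.mem_iUnion] at this
          obtain ⟨n, hn, hlt⟩ := this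
          exact ⟨n, hn, hlt.le⟩
        · exact isBoundedUnder_of ⟨0, fun n => dist_nonneg⟩
      have hle0 : liminf (fun n => dist (f^[n] p.1) (f^[n] p.2)) atTop ≤ 0 := by
        by_contra hpos
        push_neg at hpos
        obtain ⟨k, hk⟩ := exists_nat_one_div_lt hpos
        exact absurd (hle k) (not_le.2 hk)
      exact le_antisymm hle0 hge
    · right
      push_neg at hall
      obtain ⟨k, N, hkN⟩ := hall
      exact Set.mem_iUnion.2 ⟨k, Set.mem_iUnion.2 ⟨N, hkN⟩⟩
  exact IsMeagre.mono hsub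
    (hMeagre.union' (isMeagre_iUnion fun k => isMeagre_iUnion fun N => hEc k N))
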